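/- (Main theorem) Let Ω ⊆ ℝ^N be open (N ≥ 1) and φ : Ω → ℝ a pointwise differentiable solution of the eikonal equation |∇φ(x)| = 1 for all x ∈ Ω. Then ∇φ is locally Lipschitz in Ω; equivalently, φ is locally C^{1,1} in Ω. -/

import Mathlib

open Metric Set InnerProductSpace Filter Topology
open scoped RealInnerProductSpace
set_option linter.unusedSectionVars false
set_option maxHeartbeats 1000000

variable {E : Type*} [NormedAddCommGroup E] [InnerProductSpace ℝ E] [CompleteSpace E]
  [ProperSpace E]

lemma norm_gradient_eq' (φ : E → ℝ) (x : E) : ‖gradient φ x‖ = ‖fderiv ℝ φ x‖ :=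
  (toDual ℝ E).symm.norm_map _

lemma fderiv_apply_eq_inner_gradient (φ : E → ℝ) (x v : E) :
    fderiv ℝ φ x v = ⟪gradient φ x, v⟫_ℝ := by
  conv_lhs => rw [← (toDual ℝ E).apply_symm_apply (fderiv ℝ φ x)]
  rfl


lemma key_ineq {p a : E} (hp : ‖p‖ = 1) {t : ℝ} (ha : ‖a‖ < t) :
    ‖a - t • p‖ ≤ t - ⟪p, a⟫_ℝ + ‖a‖ ^ 2 / (2 * (t - ‖a‖)) := by
  have h0 : 0 ≤ ‖a‖ := norm_nonneg a
  have hd : 0 < t - ‖a‖ := sub_pos.mpr ha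
  have hip : ⟪p, a⟫_ℝ ≤ ‖a‖ := by
    calc ⟪p, a⟫_ℝ ≤ ‖p‖ * ‖a‖ := real_inner_le_norm p a
    _ = ‖a‖ := by rw [hp, one_mul]
  have hsq : ‖a - t • p‖ ^ 2 = ‖a‖ ^ 2 - 2 * t * ⟪p, a⟫_ℝ + t ^ 2 := by
    rw [norm_sub_sq_real, real_inner_smul_right, norm_smul, Real.norm_eq_abs, mul_pow,
      sq_abs, real_inner_comm, hp]
    ring
  set c := ‖a‖ ^ 2 / (2 * (t - ‖a‖)) with hc
  have hc2 : 2 * (t - ‖a‖) * c = ‖a‖ ^ 2 := by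
    rw [hc]; field_simp
  have hcnn : 0 ≤ c := div_nonneg (sq_nonneg _) (by linarith)
  have hR : 0 ≤ t - ⟪p, a⟫_ℝ + c := by linarith
  have hAR : ‖a - t • p‖ ^ 2 ≤ (t - ⟪p, a⟫_ℝ + c) ^ 2 := by
    nlinarith [mul_nonneg hcnn (sub_nonneg.mpr hip), sq_nonneg (⟪p, a⟫_ℝ), sq_nonneg c]
  nlinarith [norm_nonneg (a - t • p)]

lemma lip_of_eik {Ω : Set E} (φ : E → ℝ)
    (hdiff : ∀ x ∈ Ω, DifferentiableAt ℝ φ x) (heik : ∀ x ∈ Ω, ‖gradient φ x‖ = 1)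
    {s : Set E} (hconv : Convex ℝ s) (hsub : s ⊆ Ω) {a b : E} (ha : a ∈ s) (hb : b ∈ s) :
    φ b - φ a ≤ ‖b - a‖ := by
  have h := hconv.norm_image_sub_le_of_norm_fderiv_le (f := φ) (C := 1)
    (fun y hy => hdiff y (hsub hy))
    (fun y hy => by rw [← norm_gradient_eq']; exact (heik y (hsub hy)).le) ha hb
  calc φ b - φ a ≤ |φ b - φ a| := le_abs_self _
  _ ≤ 1 * ‖b - a‖ := h
  _ = ‖b - a‖ := one_mul _

lemma hasDerivAt_line {φ : E → ℝ} {x e : E} {s : ℝ} (hp : DifferentiableAt ℝ φ (x + s • e)) :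
    HasDerivAt (fun τ => φ (x + τ • e)) ⟪gradient φ (x + s • e), e⟫_ℝ s := by
  have h1 : HasDerivAt (fun τ : ℝ => x + τ • e) e s := by
    simpa using ((hasDerivAt_id s).smul_const e).const_add x
  have h2 := hp.hasFDerivAt.comp_hasDerivAt s h1
  rw [fderiv_apply_eq_inner_gradient] at h2
  exact h2

lemma eikonal_ray {Ω : Set E} (φ : E → ℝ)
    (hdiff : ∀ x ∈ Ω, DifferentiableAt ℝ φ x) (heik : ∀ x ∈ Ω, ‖gradient φ x‖ = 1)
    {x : E} {t : ℝ} (ht0 : 0 ≤ t) (hball : closedBall x t ⊆ Ω) :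
    φ (x + t • gradient φ x) = φ x + t := by
  rcases ht0.eq_or_lt with rfl | ht
  · simp
  have hxΩ : x ∈ Ω := hball (mem_closedBall_self ht0)
  have hlip : ∀ a ∈ closedBall x t, ∀ b ∈ closedBall x t, φ b - φ a ≤ ‖b - a‖ :=
    fun a ha b hb => lip_of_eik φ hdiff heik (convex_closedBall x t) hball ha hb
  set M : ℝ → ℝ := fun s => sSup (φ '' closedBall x s) with hMdef
  have hne : ∀ s : ℝ, 0 ≤ s → (φ '' closedBall x s).Nonempty :=
    fun s hs => ⟨φ x, mem_image_of_mem _ (mem_closedBall_self hs)⟩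
  have hbdd : ∀ s : ℝ, s ≤ t → BddAbove (φ '' closedBall x s) := by
    intro s hs
    refine ⟨φ x + t, ?_⟩
    rintro _ ⟨y, hy, rfl⟩
    have hyt : y ∈ closedBall x t := closedBall_subset_closedBall hs hy
    have h1 := hlip x (mem_closedBall_self ht0) y hyt
    have h2 : ‖y - x‖ ≤ t := mem_closedBall_iff_norm.mp hyt
    linarith
  have hMle : ∀ s, 0 ≤ s → s ≤ t → M s ≤ φ x + s := by
    intro s hs hst
    refine csSup_le (hne s hs) ?_
    rintro _ ⟨y, hy, rfl⟩
    have h1 := hlip x (mem_closedBall_self ht0) y (closedBall_subset_closedBall hst hy)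
    have h2 : ‖y - x‖ ≤ s := mem_closedBall_iff_norm.mp hy
    linarith
  have hM0 : M 0 = φ x := by
    rw [hMdef]; simp
  have hMmono : ∀ s₁ s₂, 0 ≤ s₁ → s₁ ≤ s₂ → s₂ ≤ t → M s₁ ≤ M s₂ :=
    fun s₁ s₂ h0 h12 h2t => csSup_le_csSup (hbdd s₂ h2t) (hne s₁ h0)
      (image_mono (closedBall_subset_closedBall h12))
  have hMrev : ∀ s₁ s₂, 0 ≤ s₁ → s₁ ≤ s₂ → s₂ ≤ t → M s₂ ≤ M s₁ + (s₂ - s₁) := by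
    intro s₁ s₂ h0 h12 h2t
    rcases eq_or_lt_of_le (h0.trans h12) with h20 | h20
    · have : s₁ = s₂ := le_antisymm h12 (h20.ge.trans h0)
      simp [this]
    refine csSup_le (hne s₂ (h0.trans h12)) ?_
    rintro _ ⟨y, hy, rfl⟩
    set y' := x + (s₁ / s₂) • (y - x) with hy'def
    have hyx : ‖y - x‖ ≤ s₂ := mem_closedBall_iff_norm.mp hy
    have hr0 : 0 ≤ s₁ / s₂ := div_nonneg h0 (h0.trans h12)
    have hr1 : s₁ / s₂ ≤ 1 := div_le_one_of_le₀ h12 (h0.trans h12)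
    have hy'mem : y' ∈ closedBall x s₁ := by
      rw [mem_closedBall_iff_norm]
      have : y' - x = (s₁ / s₂) • (y - x) := by rw [hy'def]; abel
      rw [this, norm_smul, Real.norm_eq_abs, abs_of_nonneg hr0]
      calc s₁ / s₂ * ‖y - x‖ ≤ s₁ / s₂ * s₂ := by
            exact mul_le_mul_of_nonneg_left hyx hr0
      _ = s₁ := div_mul_cancel₀ s₁ (ne_of_gt h20)
    have hyy' : ‖y - y'‖ ≤ s₂ - s₁ := by
      have : y - y' = (1 - s₁ / s₂) • (y - x) := by
        rw [hy'def, sub_smul, one_smul]; abel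
      rw [this, norm_smul, Real.norm_eq_abs, abs_of_nonneg (by linarith)]
      calc (1 - s₁ / s₂) * ‖y - x‖ ≤ (1 - s₁ / s₂) * s₂ := by
            exact mul_le_mul_of_nonneg_left hyx (by linarith)
      _ = s₂ - s₁ := by field_simp
    have h1 := hlip y' (closedBall_subset_closedBall (h12.trans h2t) hy'mem) y
      (closedBall_subset_closedBall h2t hy)
    have h2 : φ y' ≤ M s₁ := le_csSup (hbdd s₁ (h12.trans h2t)) (mem_image_of_mem _ hy'mem)
    linarith
  have hcont : ContinuousOn M (Icc 0 t) := by
    have hlipM : LipschitzOnWith 1 M (Icc 0 t) := by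
      apply LipschitzOnWith.of_dist_le_mul
      intro a ha b hb
      rw [Real.dist_eq, Real.dist_eq, NNReal.coe_one, one_mul]
      rcases le_total a b with h | h
      · have h1 := hMmono a b ha.1 h hb.2
        have h2 := hMrev a b ha.1 h hb.2
        rw [abs_of_nonpos (by linarith), abs_of_nonpos (by linarith)]
        linarith
      · have h1 := hMmono b a hb.1 h ha.2
        have h2 := hMrev b a hb.1 h ha.2
        rw [abs_of_nonneg (by linarith), abs_of_nonneg (by linarith)]
        linarith
    exact hlipM.continuousOn
  -- the fencing argument: M t ≥ φ x + t
  have key : φ x + t ≤ M t := by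
    have H := image_le_of_liminf_slope_right_le_deriv_boundary
      (f := fun s => -(M s)) (a := 0) (b := t) (hf := hcont.neg)
      (B := fun s => -(φ x) - s) (B' := fun _ => -1)
      (ha := by simp [hM0]) (hB := (continuous_const.sub continuous_id).continuousOn)
      (hB' := fun s _ => ((hasDerivAt_id s).const_sub (-(φ x))).hasDerivWithinAt)
      ?_ (right_mem_Icc.mpr ht0)
    · have H' : -(M t) ≤ -(φ x) - t := H
      linarith
    intro s hs r hr
    -- choose a max point y of φ on closedBall x s
    obtain ⟨y, hy, hmax⟩ := (isCompact_closedBall x s).exists_isMaxOn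
      ⟨x, mem_closedBall_self hs.1⟩
      (fun w hw => (hdiff w (hball (closedBall_subset_closedBall hs.2.le hw))).continuousAt.continuousWithinAt)
    have hyΩ : y ∈ Ω := hball (closedBall_subset_closedBall hs.2.le hy)
    have hMs : M s = φ y := by
      refine le_antisymm (csSup_le (hne s hs.1) ?_)
        (le_csSup (hbdd s hs.2.le) (mem_image_of_mem _ hy))
      rintro _ ⟨w, hw, rfl⟩
      exact hmax hw
    set g := gradient φ y with hgdef
    have hg1 : ‖g‖ = 1 := heik y hyΩ
    have hψ : HasDerivAt (fun h : ℝ => φ (y + h • g)) 1 0 := by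
      have := hasDerivAt_line (φ := φ) (x := y) (e := g) (s := 0)
        (by simpa using hdiff y hyΩ)
      simp only [zero_smul, add_zero] at this
      rwa [real_inner_self_eq_norm_sq, hg1, one_pow] at this
    set ψ : ℝ → ℝ := fun h => φ (y + h • g) with hψdef
    have hslope : Tendsto (slope ψ 0) (𝓝[≠] 0) (𝓝 1) :=
      hasDerivAt_iff_tendsto_slope.mp hψ
    have hslope' : ∀ᶠ h in 𝓝[>] 0, -r < slope ψ 0 h := by
      have h1 : Tendsto (slope ψ 0) (𝓝[>] 0) (𝓝 1) :=
        hslope.mono_left (nhdsWithin_mono 0 (fun z hz => ne_of_gt hz))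
      have hr' : (-1 : ℝ) < r := hr
      exact h1.eventually (eventually_gt_nhds (by linarith))
    have hmap : Tendsto (fun z : ℝ => z - s) (𝓝[>] s) (𝓝[>] 0) := by
      apply tendsto_nhdsWithin_of_tendsto_nhds_of_eventually_within
      · have h1 : Tendsto (fun z : ℝ => z - s) (𝓝 s) (𝓝 0) := by
          have h2 := (continuous_sub_right s).tendsto s
          simpa using h2
        exact h1.mono_left nhdsWithin_le_nhds
      · filter_upwards [self_mem_nhdsWithin] with z hz
        exact sub_pos.mpr (show s < z from hz)
    have hIoo : Ioo s t ∈ 𝓝[>] s := Ioo_mem_nhdsGT_of_mem ⟨le_refl s, hs.2⟩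
    refine ((hmap.eventually hslope').and (eventually_of_mem hIoo fun z hz => hz)).frequently.mono ?_
    rintro z ⟨hsl, hzmem⟩
    -- show slope (fun s => -(M s)) s z < r
    have hzs : 0 < z - s := sub_pos.mpr hzmem.1
    have hmem : y + (z - s) • g ∈ closedBall x z := by
      rw [mem_closedBall_iff_norm]
      have : y + (z - s) • g - x = (y - x) + (z - s) • g := by abel
      rw [this]
      calc ‖(y - x) + (z - s) • g‖ ≤ ‖y - x‖ + ‖(z - s) • g‖ := norm_add_le _ _
      _ ≤ s + (z - s) := by
          have h1 : ‖y - x‖ ≤ s := mem_closedBall_iff_norm.mp hy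
          have h2 : ‖(z - s) • g‖ = z - s := by
            rw [norm_smul, hg1, Real.norm_eq_abs, abs_of_pos hzs, mul_one]
          linarith
      _ = z := by ring
    have hMz : ψ (z - s) ≤ M z :=
      le_csSup (hbdd z hzmem.2.le) (mem_image_of_mem _ hmem)
    have hψ0 : ψ 0 = φ y := by rw [hψdef]; simp
    have hkey : -(M z) - -(M s) ≤ -(ψ (z - s) - ψ 0) := by
      rw [hψ0, ← hMs]; linarith
    have hsl' : -r < (ψ (z - s) - ψ 0) / (z - s) := by
      rwa [slope_def_field, sub_zero] at hsl
    have h3 : -(ψ (z - s) - ψ 0) < r * (z - s) := by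
      have := neg_lt.mp hsl'
      rw [← neg_div] at this
      exact (div_lt_iff₀ hzs).mp this
    rw [slope_def_field, div_lt_iff₀ hzs]
    show -(M z) - -(M s) < r * (z - s)
    linarith
  -- a maximum point at radius t
  obtain ⟨y, hy, hmax⟩ := (isCompact_closedBall x t).exists_isMaxOn
    ⟨x, mem_closedBall_self ht0⟩
    (fun w hw => (hdiff w (hball hw)).continuousAt.continuousWithinAt)
  have hMt : M t = φ y :=
    le_antisymm (csSup_le (hne t ht0) (by rintro _ ⟨w, hw, rfl⟩; exact hmax hw))
      (le_csSup (hbdd t le_rfl) (mem_image_of_mem _ hy))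
  have hyx : ‖y - x‖ ≤ t := mem_closedBall_iff_norm.mp hy
  have hlipxy := hlip x (mem_closedBall_self ht0) y hy
  have hφy : φ y = φ x + t := by
    have h2 : φ x + t ≤ φ y := by rw [← hMt]; exact key
    linarith
  have hnorm : ‖y - x‖ = t := by linarith
  set e := t⁻¹ • (y - x) with hedef
  have hte : t • e = y - x := by
    rw [hedef, smul_smul, mul_inv_cancel₀ (ne_of_gt ht), one_smul]
  have he1 : ‖e‖ = 1 := by
    rw [hedef, norm_smul, Real.norm_eq_abs, abs_of_pos (inv_pos.mpr ht), hnorm,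
      inv_mul_cancel₀ (ne_of_gt ht)]
  have hseg : ∀ s ∈ Icc (0:ℝ) t, φ (x + s • e) = φ x + s := by
    intro s hs
    have hse : ‖s • e‖ = s := by
      rw [norm_smul, Real.norm_eq_abs, abs_of_nonneg hs.1, he1, mul_one]
    have hmem : x + s • e ∈ closedBall x t := by
      rw [mem_closedBall_iff_norm]
      have hh : x + s • e - x = s • e := by abel
      rw [hh, hse]; exact hs.2
    have hup := hlip x (mem_closedBall_self ht0) (x + s • e) hmem
    have hlow := hlip (x + s • e) hmem y hy
    have hdiffv : y - (x + s • e) = (t - s) • e := by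
      rw [sub_smul, hte]; abel
    have hnv : ‖y - (x + s • e)‖ = t - s := by
      rw [hdiffv, norm_smul, Real.norm_eq_abs, abs_of_nonneg (by linarith [hs.2]), he1, mul_one]
    have hh2 : x + s • e - x = s • e := by abel
    rw [hh2, hse] at hup
    rw [hnv] at hlow
    linarith
  set q : ℝ → ℝ := fun s => φ (x + s • e) with hqdef
  have hq1 : HasDerivWithinAt q ⟪gradient φ x, e⟫_ℝ (Icc 0 t) 0 := by
    have h := hasDerivAt_line (φ := φ) (x := x) (e := e) (s := 0)
      (by simpa using hdiff x hxΩ)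
    simp only [zero_smul, add_zero] at h
    exact h.hasDerivWithinAt
  have hq2 : HasDerivWithinAt q 1 (Icc 0 t) 0 := by
    have haff : HasDerivWithinAt (fun s : ℝ => φ x + s) 1 (Icc 0 t) 0 :=
      ((hasDerivAt_id (0:ℝ)).const_add (φ x)).hasDerivWithinAt
    exact haff.congr (fun s hs => hseg s hs) (hseg 0 (left_mem_Icc.mpr ht0))
  have hu : UniqueDiffWithinAt ℝ (Icc (0:ℝ) t) 0 := (uniqueDiffOn_Icc ht) 0 (left_mem_Icc.mpr ht0)
  have hinner : ⟪gradient φ x, e⟫_ℝ = 1 := by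
    rw [← hq1.derivWithin hu]; exact hq2.derivWithin hu
  have hge : gradient φ x = e := by
    have hgx : ‖gradient φ x‖ = 1 := heik x hxΩ
    have h2 : ‖gradient φ x - e‖ ^ 2 = 0 := by
      rw [norm_sub_sq_real, hgx, he1, hinner]; norm_num
    have h3 : ‖gradient φ x - e‖ = 0 := by
      exact pow_eq_zero_iff (n := 2) (by norm_num) |>.mp h2
    have h4 : gradient φ x - e = 0 := norm_eq_zero.mp h3
    exact sub_eq_zero.mp h4
  rw [hge, hte]
  have hxy : x + (y - x) = y := by abel
  rw [hxy, hφy]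

lemma gradient_def' (φ : E → ℝ) (x : E) :
    gradient φ x = (toDual ℝ E).symm (fderiv ℝ φ x) := rfl

lemma gradient_neg' (φ : E → ℝ) (x : E) :
    gradient (fun z => -φ z) x = -gradient φ x := by
  rw [gradient_def', gradient_def', fderiv_fun_neg, map_neg]

lemma eikonal_ray_neg {Ω : Set E} (φ : E → ℝ)
    (hdiff : ∀ x ∈ Ω, DifferentiableAt ℝ φ x) (heik : ∀ x ∈ Ω, ‖gradient φ x‖ = 1)
    {x : E} {t : ℝ} (ht0 : 0 ≤ t) (hball : closedBall x t ⊆ Ω) :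
    φ (x - t • gradient φ x) = φ x - t := by
  have hd' : ∀ y ∈ Ω, DifferentiableAt ℝ (fun z => -φ z) y := fun y hy => (hdiff y hy).neg
  have he' : ∀ y ∈ Ω, ‖gradient (fun z => -φ z) y‖ = 1 := by
    intro y hy; rw [gradient_neg', norm_neg]; exact heik y hy
  have h := eikonal_ray (fun z => -φ z) hd' he' ht0 hball
  rw [gradient_neg'] at h
  have h2 : x + t • -gradient φ x = x - t • gradient φ x := by
    rw [smul_neg]; abel
  rw [h2] at h
  have h3 : -φ (x - t • gradient φ x) = -φ x + t := h
  linarith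

lemma eikonal_quad {Ω : Set E} (φ : E → ℝ)
    (hdiff : ∀ x ∈ Ω, DifferentiableAt ℝ φ x) (heik : ∀ x ∈ Ω, ‖gradient φ x‖ = 1)
    {x z : E} {t : ℝ} (hball : closedBall x t ⊆ Ω) (hz : ‖z - x‖ < t) :
    |φ z - φ x - ⟪gradient φ x, z - x⟫_ℝ| ≤ ‖z - x‖ ^ 2 / (2 * (t - ‖z - x‖)) := by
  have ht0 : 0 ≤ t := le_trans (norm_nonneg _) hz.le
  have hxΩ : x ∈ Ω := hball (mem_closedBall_self ht0)
  have hg1 : ‖gradient φ x‖ = 1 := heik x hxΩ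
  set g := gradient φ x with hgdef
  set a := z - x with hadef
  have hzmem : z ∈ closedBall x t := mem_closedBall_iff_norm.mpr hz.le
  have hfwd := eikonal_ray φ hdiff heik ht0 hball
  have hbwd := eikonal_ray_neg φ hdiff heik ht0 hball
  have htg : ‖t • g‖ = t := by
    rw [norm_smul, Real.norm_eq_abs, abs_of_nonneg ht0, hg1, mul_one]
  have hmemf : x + t • g ∈ closedBall x t := by
    rw [mem_closedBall_iff_norm]
    have hh : x + t • g - x = t • g := by abel
    rw [hh, htg]
  have hmemb : x - t • g ∈ closedBall x t := by
    rw [mem_closedBall_iff_norm]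
    have hh : x - t • g - x = -(t • g) := by abel
    rw [hh, norm_neg, htg]
  have hlip : ∀ p ∈ closedBall x t, ∀ q ∈ closedBall x t, φ q - φ p ≤ ‖q - p‖ :=
    fun p hp q hq => lip_of_eik φ hdiff heik (convex_closedBall x t) hball hp hq
  have h1 := hlip z hzmem (x + t • g) hmemf
  have h2 := hlip (x - t • g) hmemb z hzmem
  have e1 : x + t • g - z = t • g - a := by rw [hadef]; abel
  have e2 : z - (x - t • g) = a - t • (-g) := by rw [hadef, smul_neg]; abel
  rw [e1] at h1
  rw [e2] at h2
  have bound1 : ‖t • g - a‖ ≤ t - ⟪g, a⟫_ℝ + ‖a‖ ^ 2 / (2 * (t - ‖a‖)) := by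
    rw [norm_sub_rev]; exact key_ineq hg1 hz
  have bound2 : ‖a - t • (-g)‖ ≤ t + ⟪g, a⟫_ℝ + ‖a‖ ^ 2 / (2 * (t - ‖a‖)) := by
    have h := key_ineq (p := -g) (by rw [norm_neg]; exact hg1) hz
    rw [inner_neg_left] at h
    linarith [h]
  rw [abs_le]
  constructor
  · -- lower bound
    have := hfwd
    nlinarith [h1, bound1, this]
  · have := hbwd
    nlinarith [h2, bound2, this]

theorem eikonal_gradient_locally_lipschitz {N : ℕ} {Ω : Set (EuclideanSpace ℝ (Fin N))}
    (hΩ : IsOpen Ω) (φ : EuclideanSpace ℝ (Fin N) → ℝ)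
    (hdiff : ∀ x ∈ Ω, DifferentiableAt ℝ φ x)
    (heik : ∀ x ∈ Ω, ‖gradient φ x‖ = 1) :
    ∀ x ∈ Ω, ∃ s ∈ nhds x, s ⊆ Ω ∧
      ∃ K : NNReal, LipschitzOnWith K (fun y => gradient φ y) s := by
  intro x₀ hx₀
  obtain ⟨ε, hε, hballε⟩ := Metric.isOpen_iff.mp hΩ x₀ hx₀
  set r := ε / 10 with hrdef
  have hr0 : 0 < r := by positivity
  have hsub9 : closedBall x₀ (9 * r) ⊆ Ω := by
    intro y hy
    apply hballε
    rw [mem_ball]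
    have h := mem_closedBall.mp hy
    rw [hrdef] at *
    linarith
  refine ⟨ball x₀ r, ball_mem_nhds x₀ hr0, ?_, ?_⟩
  · exact fun y hy =>
      hsub9 (closedBall_subset_closedBall (by linarith) (ball_subset_closedBall hy))
  refine ⟨Real.toNNReal (3 / (2 * r)), ?_⟩
  apply LipschitzOnWith.of_dist_le_mul
  intro a ha b hb
  rcases eq_or_ne a b with rfl | hab
  · simp
  set d := ‖a - b‖ with hddef
  have hd0 : 0 < d := by
    rw [hddef]; exact norm_pos_iff.mpr (sub_ne_zero.mpr hab)
  have hd2r : d < 2 * r := by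
    have h1 : dist a x₀ < r := mem_ball.mp ha
    have h2 : dist b x₀ < r := mem_ball.mp hb
    calc d = dist a b := (dist_eq_norm a b).symm
    _ ≤ dist a x₀ + dist x₀ b := dist_triangle _ _ _
    _ < 2 * r := by rw [dist_comm x₀ b]; linarith
  have hballa : closedBall a (8 * r) ⊆ Ω := by
    intro w hw; apply hsub9
    rw [mem_closedBall] at *
    calc dist w x₀ ≤ dist w a + dist a x₀ := dist_triangle _ _ _
    _ ≤ 8 * r + r := add_le_add hw (mem_ball.mp ha).le
    _ = 9 * r := by ring
  have hballb : closedBall b (8 * r) ⊆ Ω := by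
    intro w hw; apply hsub9
    rw [mem_closedBall] at *
    calc dist w x₀ ≤ dist w b + dist b x₀ := dist_triangle _ _ _
    _ ≤ 8 * r + r := add_le_add hw (mem_ball.mp hb).le
    _ = 9 * r := by ring
  set ga := gradient φ a with hgadef
  set gb := gradient φ b with hgbdef
  rcases eq_or_ne ga gb with hgeq | hgne
  · rw [hgeq]; simp; positivity
  have hΔ0 : ga - gb ≠ 0 := sub_ne_zero.mpr hgne
  set u := ‖ga - gb‖⁻¹ • (ga - gb) with hudef
  have hu1 : ‖u‖ = 1 := norm_smul_inv_norm hΔ0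
  set z := b + d • u with hzdef
  have hzb : z - b = d • u := by rw [hzdef]; abel
  have hnzb : ‖z - b‖ = d := by
    rw [hzb, norm_smul, Real.norm_eq_abs, abs_of_pos hd0, hu1, mul_one]
  have hnza : ‖z - a‖ ≤ 2 * d := by
    calc ‖z - a‖ = ‖(z - b) + (b - a)‖ := by congr 1; abel
    _ ≤ ‖z - b‖ + ‖b - a‖ := norm_add_le _ _
    _ = d + d := by rw [hnzb, norm_sub_rev, ← hddef]
    _ = 2 * d := by ring
  have hE1 := eikonal_quad φ hdiff heik (x := a) (z := z) hballa
    (lt_of_le_of_lt hnza (by linarith))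
  have hE2 := eikonal_quad φ hdiff heik (x := b) (z := z) hballb
    (by rw [hnzb]; linarith)
  have hba : ‖b - a‖ = d := by rw [hddef, norm_sub_rev]
  have hE3 := eikonal_quad φ hdiff heik (x := a) (z := b) hballa
    (by rw [hba]; linarith)
  rw [hba] at hE3
  rw [hnzb] at hE2
  -- uniform bounds by d^2/(2r)
  have hB1 : ‖z - a‖ ^ 2 / (2 * (8 * r - ‖z - a‖)) ≤ d ^ 2 / (2 * r) := by
    have hza0 : 0 ≤ ‖z - a‖ := norm_nonneg _
    rw [div_le_div_iff₀ (by linarith) (by linarith)]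
    have h1 : d ^ 2 * ‖z - a‖ ≤ d ^ 2 * (2 * d) := mul_le_mul_of_nonneg_left hnza (sq_nonneg d)
    have h2 : r * ‖z - a‖ ^ 2 ≤ r * (2 * d) ^ 2 :=
      mul_le_mul_of_nonneg_left (pow_le_pow_left₀ hza0 hnza 2) hr0.le
    have h3 : d ^ 2 * d < d ^ 2 * (2 * r) := mul_lt_mul_of_pos_left hd2r (pow_pos hd0 2)
    nlinarith [h1, h2, h3]
  have hB2 : d ^ 2 / (2 * (8 * r - d)) ≤ d ^ 2 / (2 * r) := by
    rw [div_le_div_iff₀ (by linarith) (by linarith)]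
    nlinarith [mul_pos hd0 hd0]
  have hA1 : |φ z - φ a - ⟪ga, z - a⟫_ℝ| ≤ d ^ 2 / (2 * r) := le_trans hE1 hB1
  have hA2 : |φ z - φ b - ⟪gb, z - b⟫_ℝ| ≤ d ^ 2 / (2 * r) := le_trans hE2 hB2
  have hA3 : |φ b - φ a - ⟪ga, b - a⟫_ℝ| ≤ d ^ 2 / (2 * r) := le_trans hE3 hB2
  have hinnerid : ⟪ga - gb, z - b⟫_ℝ = d * ‖ga - gb‖ := by
    rw [hzb, hudef, real_inner_smul_right, real_inner_smul_right,
      real_inner_self_eq_norm_sq]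
    field_simp [norm_ne_zero_iff.mpr hΔ0]
  have hcomb : (φ z - φ b - ⟪gb, z - b⟫_ℝ) + (φ b - φ a - ⟪ga, b - a⟫_ℝ)
      - (φ z - φ a - ⟪ga, z - a⟫_ℝ) = ⟪ga - gb, z - b⟫_ℝ := by
    rw [inner_sub_left]
    have h1 : ⟪ga, z - a⟫_ℝ - ⟪ga, b - a⟫_ℝ = ⟪ga, z - b⟫_ℝ := by
      rw [← inner_sub_right]
      congr 1
      abel
    linarith
  have hsum : d * ‖ga - gb‖ ≤ 3 * (d ^ 2 / (2 * r)) := by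
    rw [← hinnerid, ← hcomb]
    have l1 := abs_le.mp hA1
    have l2 := abs_le.mp hA2
    have l3 := abs_le.mp hA3
    linarith [l1.1, l2.2, l3.2]
  have hfin : ‖ga - gb‖ ≤ 3 / (2 * r) * d := by
    have h' : d * ‖ga - gb‖ * (2 * r) ≤ 3 * d ^ 2 := by
      have he : (3 : ℝ) * (d ^ 2 / (2 * r)) = 3 * d ^ 2 / (2 * r) := by ring
      rw [he] at hsum
      exact (le_div_iff₀ (by linarith)).mp hsum
    have h'' : d * (‖ga - gb‖ * (2 * r)) ≤ d * (3 * d) := by nlinarith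
    have h3 := le_of_mul_le_mul_left h'' hd0
    rw [div_mul_eq_mul_div, le_div_iff₀ (by linarith : (0:ℝ) < 2 * r)]
    linarith
  rw [dist_eq_norm, dist_eq_norm, ← hddef, Real.coe_toNNReal _ (by positivity)]
  exact hfin
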